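/- With η = α = 1/(2σ_max(A)) and β = 0, the spectral radius of the LEAD update Jacobian ∇F_LEAD for the bilinear game f(X,Y) = XᵀAY equals √(1/2 + (1/2)√(1 - σ_min(A)²/σ_max(A)²)), which is strictly less than 1 whenever σ_min(A) > 0. -/

import Mathlib

open Matrix

section Helpers

variable {m m' : Type*} [Fintype m] [Fintype m'] [DecidableEq m] [DecidableEq m']

set_option linter.unusedSectionVars false

lemma my_smul_elim {a : m → ℂ} {b : m' → ℂ} (c : ℂ) :
    c • Sum.elim a b = Sum.elim (c • a) (c • b) := by
  funext i; cases i <;> simp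

lemma my_map_smul (r : ℝ) (M : Matrix m m' ℝ) :
    (r • M).map Complex.ofReal = (r : ℂ) • M.map Complex.ofReal := by
  ext i j; simp

lemma my_map_sub (M N : Matrix m m' ℝ) :
    (M - N).map Complex.ofReal = M.map Complex.ofReal - N.map Complex.ofReal := by
  ext i j; simp

lemma my_map_one :
    (1 : Matrix m m ℝ).map Complex.ofReal = 1 :=
  Matrix.map_one _ Complex.ofReal_zero Complex.ofReal_one

lemma my_map_mul (M N : Matrix m m ℝ) :
    (M * N).map Complex.ofReal = M.map Complex.ofReal * N.map Complex.ofReal := by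
  ext i j
  simp [Matrix.mul_apply]

lemma my_mulVec_star (R : Matrix m m' ℝ) (w : m' → ℂ) :
    (R.map Complex.ofReal) *ᵥ (star w) = star ((R.map Complex.ofReal) *ᵥ w) := by
  funext i
  simp only [Matrix.mulVec, dotProduct, Pi.star_apply, Matrix.map_apply]
  rw [show star (∑ j, (R i j : ℂ) * w j) = ∑ j, star ((R i j : ℂ) * w j) from star_sum _ _]
  refine Finset.sum_congr rfl fun j _ => ?_
  rw [star_mul']
  simp

lemma my_star_dot (v : m → ℂ) :
    star v ⬝ᵥ v = ((∑ i, Complex.normSq (v i) : ℝ) : ℂ) := by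
  simp only [dotProduct, Pi.star_apply]
  push_cast
  refine Finset.sum_congr rfl fun j _ => ?_
  rw [Complex.normSq_eq_conj_mul_self]
  rfl

lemma my_star_dot_pos {v : m → ℂ} (hv : v ≠ 0) :
    0 < ∑ i, Complex.normSq (v i) := by
  have : ∃ i, v i ≠ 0 := by
    by_contra h; push_neg at h; exact hv (funext h)
  obtain ⟨i, hi⟩ := this
  have h1 : 0 < Complex.normSq (v i) := by
    simpa [Complex.normSq_pos] using hi
  refine Finset.sum_pos' (fun j _ => Complex.normSq_nonneg _) ⟨i, Finset.mem_univ i, h1⟩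

end Helpers

section Helpers3
variable {m m' : Type*} [Fintype m] [Fintype m'] [DecidableEq m] [DecidableEq m']
set_option linter.unusedSectionVars false

lemma my_map_neg (M : Matrix m m' ℝ) :
    (-M).map Complex.ofReal = -(M.map Complex.ofReal) := by
  ext i j; simp

lemma my_mulVec_map (M : Matrix m m' ℝ) (v : m' → ℝ) :
    (M.map Complex.ofReal) *ᵥ (fun i => ((v i : ℝ) : ℂ)) =
      fun i => (((M *ᵥ v) i : ℝ) : ℂ) := by
  funext i
  simp only [Matrix.mulVec, dotProduct, Matrix.map_apply]
  push_cast
  rfl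

end Helpers3

section Helpers2

lemma my_det_map_zero {k : Type*} [Fintype k] [DecidableEq k]
    {M : Matrix k k ℝ} (h : (M.map Complex.ofReal).det = 0) : M.det = 0 := by
  have h1 : ((M.det : ℝ) : ℂ) = (M.map Complex.ofReal).det :=
    RingHom.map_det Complex.ofRealHom M
  rw [h] at h1
  exact_mod_cast h1

lemma my_sigma (n : ℕ) (A : Matrix (Fin n) (Fin n) ℝ) (t : ℂ) (w : Fin n → ℂ) (hw : w ≠ 0)
    (ht : ((Aᵀ * A).map Complex.ofReal) *ᵥ w = t • w) :
    ∃ σ : ℝ, 0 ≤ σ ∧ (∃ w' : Fin n → ℝ, w' ≠ 0 ∧ (Aᵀ * A).mulVec w' = (σ ^ 2) • w') ∧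
      t = (σ : ℂ) ^ 2 := by
  set Bc := A.map Complex.ofReal with hBc
  have hM : (Aᵀ * A).map Complex.ofReal = Bcᵀ * Bc := by
    rw [my_map_mul, Matrix.transpose_map]
  set P : ℝ := ∑ i, Complex.normSq (w i) with hP
  set Q : ℝ := ∑ i, Complex.normSq ((Bc *ᵥ w) i) with hQ
  have hPpos : 0 < P := my_star_dot_pos hw
  have key : t * (P : ℂ) = (Q : ℂ) := by
    have e1 : star w ⬝ᵥ (((Aᵀ * A).map Complex.ofReal) *ᵥ w) = t * (P : ℂ) := by
      rw [ht, dotProduct_smul, my_star_dot, smul_eq_mul]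
    have e2 : star w ⬝ᵥ (((Aᵀ * A).map Complex.ofReal) *ᵥ w) = (Q : ℂ) := by
      rw [hM, ← Matrix.mulVec_mulVec, Matrix.dotProduct_mulVec, Matrix.vecMul_transpose,
        my_mulVec_star, my_star_dot]
    rw [← e1, e2]
  set tr : ℝ := Q / P with htr
  have hPne : (P : ℂ) ≠ 0 := by exact_mod_cast hPpos.ne'
  have htreq : t = (tr : ℂ) := by
    rw [htr]
    push_cast
    rw [eq_div_iff hPne]
    exact key
  have hQnonneg : 0 ≤ Q := Finset.sum_nonneg fun i _ => Complex.normSq_nonneg _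
  have htrnonneg : 0 ≤ tr := div_nonneg hQnonneg hPpos.le
  refine ⟨Real.sqrt tr, Real.sqrt_nonneg _, ?_, ?_⟩
  · -- real eigenvector
    set Mr : Matrix (Fin n) (Fin n) ℝ := Aᵀ * A - tr • 1 with hMr
    have hmapMr : Mr.map Complex.ofReal = (Aᵀ * A).map Complex.ofReal - (tr : ℂ) • 1 := by
      rw [hMr, my_map_sub, my_map_smul, my_map_one]
    have hker : (Mr.map Complex.ofReal) *ᵥ w = 0 := by
      rw [hmapMr, Matrix.sub_mulVec, Matrix.smul_mulVec, Matrix.one_mulVec, ht, ← htreq,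
        sub_self]
    have hdetC : (Mr.map Complex.ofReal).det = 0 :=
      Matrix.exists_mulVec_eq_zero_iff.mp ⟨w, hw, hker⟩
    have hdetR : Mr.det = 0 := my_det_map_zero hdetC
    obtain ⟨w', hw', hker'⟩ := Matrix.exists_mulVec_eq_zero_iff.mpr hdetR
    refine ⟨w', hw', ?_⟩
    have := hker'
    rw [hMr, Matrix.sub_mulVec, Matrix.smul_mulVec, Matrix.one_mulVec, sub_eq_zero] at this
    rw [this, Real.sq_sqrt htrnonneg]
  · rw [htreq]
    norm_cast
    rw [Real.sq_sqrt htrnonneg]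

lemma my_scalar_bound (σmax σ : ℝ) (hmaxpos : 0 < σmax) (hσ : 0 ≤ σ) (hle : σ ≤ σmax)
    (μ lam : ℂ) (hlam : lam ^ 2 = -(σ : ℂ) ^ 2)
    (heq : μ ^ 2 - μ =
      (((1 / (2 * σmax) : ℝ) : ℂ) - 2 * ((1 / (2 * σmax) : ℝ) : ℂ) * μ) * lam) :
    ‖μ‖ ^ 2 ≤ (1 + Real.sqrt (1 - σ ^ 2 / σmax ^ 2)) / 2 := by
  have hmaxne : (σmax : ℂ) ≠ 0 := by exact_mod_cast hmaxpos.ne'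
  set aC : ℂ := ((1 / (2 * σmax) : ℝ) : ℂ) with haCdef
  have haC : aC = 1 / (2 * (σmax : ℂ)) := by rw [haCdef]; push_cast; ring
  set d : ℝ := Real.sqrt (1 - σ ^ 2 / σmax ^ 2) with hddef
  have hnn : 0 ≤ 1 - σ ^ 2 / σmax ^ 2 := by
    have h1 : σ ^ 2 ≤ σmax ^ 2 := by nlinarith
    have h2 : σ ^ 2 / σmax ^ 2 ≤ 1 := by
      rw [div_le_one (by positivity)]
      exact h1
    linarith
  have hd2 : d ^ 2 = 1 - σ ^ 2 / σmax ^ 2 := Real.sq_sqrt hnn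
  have hdnn : 0 ≤ d := Real.sqrt_nonneg _
  have hdC : ((d : ℝ) : ℂ) ^ 2 = 1 - (σ : ℂ) ^ 2 / (σmax : ℂ) ^ 2 := by
    rw [show ((d : ℝ) : ℂ) ^ 2 = ((d ^ 2 : ℝ) : ℂ) by push_cast; ring, hd2]
    push_cast
    ring
  -- square identity
  have hsq1 : (2 * μ - 1 + 2 * aC * lam) ^ 2 = 1 + 4 * aC ^ 2 * lam ^ 2 := by
    linear_combination 4 * heq
  have hsq : (2 * μ - 1 + 2 * aC * lam) ^ 2 = ((d : ℝ) : ℂ) ^ 2 := by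
    rw [hsq1, hlam, haC, hdC]
    field_simp
    ring
  have hfac : (2 * μ - 1 + 2 * aC * lam - ((d : ℝ) : ℂ)) *
      (2 * μ - 1 + 2 * aC * lam + ((d : ℝ) : ℂ)) = 0 := by
    linear_combination hsq
  have hlamfac : (lam - (σ : ℂ) * Complex.I) * (lam + (σ : ℂ) * Complex.I) = 0 := by
    linear_combination hlam - (σ : ℂ) ^ 2 * Complex.I_sq
  obtain ⟨ε₁, hε₁, h1⟩ : ∃ e : ℝ, (e = 1 ∨ e = -1) ∧
      2 * μ - 1 + 2 * aC * lam = (e : ℂ) * ((d : ℝ) : ℂ) := by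
    rcases mul_eq_zero.mp hfac with h | h
    · exact ⟨1, Or.inl rfl, by push_cast; linear_combination h⟩
    · exact ⟨-1, Or.inr rfl, by push_cast; linear_combination h⟩
  obtain ⟨ε₂, hε₂, h2⟩ : ∃ e : ℝ, (e = 1 ∨ e = -1) ∧ lam = (e : ℂ) * (σ : ℂ) * Complex.I := by
    rcases mul_eq_zero.mp hlamfac with h | h
    · exact ⟨1, Or.inl rfl, by push_cast; linear_combination h⟩
    · exact ⟨-1, Or.inr rfl, by push_cast; linear_combination h⟩
  have hμ : μ = (((1 + ε₁ * d) / 2 : ℝ) : ℂ) + ((-(ε₂ * σ) / (2 * σmax) : ℝ) : ℂ) * Complex.I := by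
    push_cast
    linear_combination (1 / 2) * h1 - aC * h2 - (ε₂ : ℂ) * (σ : ℂ) * Complex.I * haC
  rw [hμ, Complex.sq_norm, Complex.normSq_add_mul_I]
  have he1 : ε₁ ^ 2 = 1 := by rcases hε₁ with rfl | rfl <;> norm_num
  have he2 : ε₂ ^ 2 = 1 := by rcases hε₂ with rfl | rfl <;> norm_num
  have hεd : ε₁ * d ≤ d := by rcases hε₁ with rfl | rfl <;> nlinarith
  have hs : (-(ε₂ * σ) / (2 * σmax)) ^ 2 = (σ ^ 2 / σmax ^ 2) / 4 := by
    field_simp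
    linear_combination 4 * σ ^ 2 * he2
  rw [hs]
  nlinarith [hd2, hεd]

/-- With η = α = 1/(2σ_max(A)) and β = 0, the spectral radius of the LEAD update
Jacobian for the bilinear game equals √(1/2 + (1/2)√(1 - σ_min²/σ_max²)) < 1. -/
theorem lead_spectral_radius
    (n : ℕ) (A : Matrix (Fin n) (Fin n) ℝ) (hA : IsUnit A.det)
    (σmax σmin : ℝ)
    (hmax : IsGreatest {σ : ℝ | 0 ≤ σ ∧
      ∃ w : Fin n → ℝ, w ≠ 0 ∧ (Aᵀ * A).mulVec w = (σ ^ 2) • w} σmax)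
    (hmin : IsLeast {σ : ℝ | 0 ≤ σ ∧
      ∃ w : Fin n → ℝ, w ≠ 0 ∧ (Aᵀ * A).mulVec w = (σ ^ 2) • w} σmin)
    (hσmin : 0 < σmin)
    (η α : ℝ) (hη : η = 1 / (2 * σmax)) (hα : α = 1 / (2 * σmax))
    (J : Matrix (Fin n ⊕ Fin n) (Fin n ⊕ Fin n) ℝ)
    (hJ : J = Matrix.fromBlocks 0 A (-Aᵀ) 0) :
    IsGreatest {r : ℝ | ∃ μ : ℂ,
        (∃ z : ((Fin n ⊕ Fin n) ⊕ (Fin n ⊕ Fin n)) → ℂ, z ≠ 0 ∧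
          ((Matrix.fromBlocks ((1 : Matrix (Fin n ⊕ Fin n) (Fin n ⊕ Fin n) ℝ) - (η + α) • J)
              (α • J) 1 0).map (Complex.ofReal)).mulVec z = μ • z) ∧
        r = ‖μ‖}
      (Real.sqrt (1/2 + (1/2) * Real.sqrt (1 - σmin ^ 2 / σmax ^ 2))) ∧
    Real.sqrt (1/2 + (1/2) * Real.sqrt (1 - σmin ^ 2 / σmax ^ 2)) < 1 := by
  -- basic real facts
  have hminmax : σmin ≤ σmax := hmin.2 hmax.1
  have hmaxpos : 0 < σmax := lt_of_lt_of_le hσmin hminmax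
  have hmaxne : σmax ≠ 0 := hmaxpos.ne'
  have hmaxCne : (σmax : ℂ) ≠ 0 := by exact_mod_cast hmaxne
  set d0 : ℝ := Real.sqrt (1 - σmin ^ 2 / σmax ^ 2) with hd0def
  have hnn0 : 0 ≤ 1 - σmin ^ 2 / σmax ^ 2 := by
    have h1 : σmin ^ 2 ≤ σmax ^ 2 := by nlinarith
    have h2 : σmin ^ 2 / σmax ^ 2 ≤ 1 := by
      rw [div_le_one (by positivity)]; exact h1
    linarith
  have hd02 : d0 ^ 2 = 1 - σmin ^ 2 / σmax ^ 2 := Real.sq_sqrt hnn0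
  have hd0nn : 0 ≤ d0 := Real.sqrt_nonneg _
  have hd0lt : d0 < 1 := by
    have hp : 0 < σmin ^ 2 / σmax ^ 2 := by positivity
    nlinarith
  -- complex matrices
  set Bc : Matrix (Fin n) (Fin n) ℂ := A.map Complex.ofReal with hBcdef
  set Jc : Matrix (Fin n ⊕ Fin n) (Fin n ⊕ Fin n) ℂ := J.map Complex.ofReal with hJcdef
  have hJc : Jc = Matrix.fromBlocks 0 Bc (-Bcᵀ) 0 := by
    rw [hJcdef, hJ, Matrix.fromBlocks_map]
    rw [Matrix.map_zero _ Complex.ofReal_zero, my_map_neg, Matrix.transpose_map]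
  have hAAc : (Aᵀ * A).map Complex.ofReal = Bcᵀ * Bc := by
    rw [my_map_mul, Matrix.transpose_map]
  set aC : ℂ := ((1 / (2 * σmax) : ℝ) : ℂ) with haCdef
  have haC : aC = 1 / (2 * (σmax : ℂ)) := by rw [haCdef]; push_cast; ring
  have haCne : aC ≠ 0 := by
    rw [haC]
    exact div_ne_zero one_ne_zero (by simpa using hmaxCne)
  set kC : ℂ := ((η + α : ℝ) : ℂ) with hkCdef
  have hkC : kC = 2 * aC := by
    rw [hkCdef, haCdef, hη, hα]; push_cast; ring
  have hαC : ((α : ℝ) : ℂ) = aC := by rw [hα]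
  have hMc : ((Matrix.fromBlocks ((1 : Matrix (Fin n ⊕ Fin n) (Fin n ⊕ Fin n) ℝ) - (η + α) • J)
        (α • J) 1 0).map Complex.ofReal) =
      Matrix.fromBlocks (1 - kC • Jc) (aC • Jc) (1 : Matrix (Fin n ⊕ Fin n) (Fin n ⊕ Fin n) ℂ) 0 := by
    simp only [Matrix.fromBlocks_map, my_map_sub, my_map_one, my_map_smul, hαC,
      Matrix.map_zero _ Complex.ofReal_zero]
    rfl
  -- cast facts for complex numbers
  have hsCne : (σmin : ℂ) ≠ 0 := by exact_mod_cast hσmin.ne'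
  have hd0C : ((d0 : ℝ) : ℂ) ^ 2 = 1 - (σmin : ℂ) ^ 2 / (σmax : ℂ) ^ 2 := by
    rw [show ((d0 : ℝ) : ℂ) ^ 2 = ((d0 ^ 2 : ℝ) : ℂ) by push_cast; ring, hd02]
    push_cast; ring
  -- === membership ===
  obtain ⟨w, hw, hweq⟩ := hmin.1.2
  set wc : Fin n → ℂ := fun i => ((w i : ℝ) : ℂ) with hwcdef
  have hwc0 : wc ≠ 0 := by
    intro h
    apply hw
    funext i
    have := congrFun h i
    simpa [hwcdef, Complex.ofReal_eq_zero] using this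
  have hwceq : (Bcᵀ * Bc) *ᵥ wc = ((σmin : ℂ) ^ 2) • wc := by
    have h1 := my_mulVec_map (Aᵀ * A) w
    rw [hweq] at h1
    rw [← hAAc, hwcdef, h1]
    funext i
    push_cast
    simp
  set lam0 : ℂ := (σmin : ℂ) * Complex.I with hlam0def
  set u : Fin n → ℂ := (-Complex.I / (σmin : ℂ)) • (Bc *ᵥ wc) with hudef
  set p : Fin n ⊕ Fin n → ℂ := Sum.elim u wc with hpdef
  have hp0 : p ≠ 0 := fun h => hwc0 (funext fun i => congrFun h (Sum.inr i))
  have hJp : Jc *ᵥ p = lam0 • p := by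
    have htop : Bc *ᵥ wc = lam0 • u := by
      rw [hudef, smul_smul]
      rw [show lam0 * (-Complex.I / (σmin : ℂ)) = 1 by
        rw [hlam0def]; field_simp; linear_combination -Complex.I_sq]
      rw [one_smul]
    have hbot : (-Bcᵀ) *ᵥ u = lam0 • wc := by
      rw [Matrix.neg_mulVec, hudef, Matrix.mulVec_smul, Matrix.mulVec_mulVec, hwceq,
        smul_smul, ← neg_smul]
      congr 1
      rw [hlam0def]
      field_simp
    conv_rhs => rw [hpdef, my_smul_elim]
    rw [hJc, hpdef, Matrix.fromBlocks_mulVec]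
    rw [show Sum.elim u wc ∘ Sum.inl = u from rfl, show Sum.elim u wc ∘ Sum.inr = wc from rfl,
      Matrix.zero_mulVec, Matrix.zero_mulVec, zero_add, add_zero, htop, hbot]
  set μ0 : ℂ := (1 + (d0 : ℂ)) / 2 - ((σmin : ℂ) / (2 * (σmax : ℂ))) * Complex.I
    with hμ0def
  have hlam0sq : lam0 ^ 2 = -(σmin : ℂ) ^ 2 := by
    rw [hlam0def, mul_pow, Complex.I_sq]; ring
  have hlin : 2 * μ0 - 1 + 2 * aC * lam0 = ((d0 : ℝ) : ℂ) := by
    rw [hμ0def, hlam0def, haC]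
    field_simp
    ring
  have hd02' : σmax ^ 2 * d0 ^ 2 = σmax ^ 2 - σmin ^ 2 := by
    rw [hd02]; field_simp
  have hd0C2 : (σmax : ℂ) ^ 2 * (d0 : ℂ) ^ 2 = (σmax : ℂ) ^ 2 - (σmin : ℂ) ^ 2 := by
    exact_mod_cast congrArg Complex.ofReal hd02'
  have hquad : μ0 ^ 2 - μ0 = (aC - 2 * aC * μ0) * lam0 := by
    have h1 : (2 * μ0 - 1 + 2 * aC * lam0) ^ 2 = ((d0 : ℝ) : ℂ) ^ 2 := by rw [hlin]
    linear_combination (1 / 4) * h1 + (1 / 4) * hd0C - aC ^ 2 * hlam0sq +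
      (σmin : ℂ) ^ 2 * (aC + 1 / (2 * (σmax : ℂ))) * haC
  set z : ((Fin n ⊕ Fin n) ⊕ (Fin n ⊕ Fin n)) → ℂ := Sum.elim (μ0 • p) p with hzdef
  have hz0 : z ≠ 0 := fun h => hp0 (funext fun i => congrFun h (Sum.inr i))
  have habs : ‖μ0‖ ^ 2 = 1 / 2 + 1 / 2 * d0 := by
    rw [show μ0 = (((1 + d0) / 2 : ℝ) : ℂ) + ((-σmin / (2 * σmax) : ℝ) : ℂ) * Complex.I by
      rw [hμ0def]; push_cast; ring]
    rw [Complex.sq_norm, Complex.normSq_add_mul_I]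
    field_simp
    linear_combination hd02'
  have hrabs : Real.sqrt (1 / 2 + 1 / 2 * d0) = ‖μ0‖ := by
    rw [← habs, Real.sqrt_sq (norm_nonneg _)]
  have hmem : ∃ μ : ℂ,
      (∃ z : ((Fin n ⊕ Fin n) ⊕ (Fin n ⊕ Fin n)) → ℂ, z ≠ 0 ∧
        ((Matrix.fromBlocks ((1 : Matrix (Fin n ⊕ Fin n) (Fin n ⊕ Fin n) ℝ) - (η + α) • J)
            (α • J) 1 0).map (Complex.ofReal)).mulVec z = μ • z) ∧
      Real.sqrt (1/2 + (1/2) * d0) = ‖μ‖ := by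
    refine ⟨μ0, ⟨z, hz0, ?_⟩, by rw [show (1:ℝ)/2 + (1/2) * d0 = 1/2 + 1/2*d0 by ring]; exact hrabs⟩
    have htop : (1 - kC • Jc) *ᵥ (μ0 • p) + (aC • Jc) *ᵥ p = μ0 • (μ0 • p) := by
      rw [Matrix.sub_mulVec, Matrix.one_mulVec, Matrix.smul_mulVec,
        Matrix.smul_mulVec, Matrix.mulVec_smul, hJp, smul_smul, smul_smul, smul_smul,
        smul_smul]
      rw [← sub_smul, ← add_smul]
      congr 1
      rw [hkC]
      linear_combination -hquad
    have hbot : (1 : Matrix (Fin n ⊕ Fin n) (Fin n ⊕ Fin n) ℂ) *ᵥ (μ0 • p) +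
        (0 : Matrix (Fin n ⊕ Fin n) (Fin n ⊕ Fin n) ℂ) *ᵥ p = μ0 • p := by
      rw [Matrix.one_mulVec, Matrix.zero_mulVec, add_zero]
    conv_rhs => rw [hzdef, my_smul_elim]
    rw [hMc, hzdef, Matrix.fromBlocks_mulVec]
    rw [show Sum.elim (μ0 • p) p ∘ Sum.inl = μ0 • p from rfl,
      show Sum.elim (μ0 • p) p ∘ Sum.inr = p from rfl, htop, hbot]
  -- === upper bound ===
  have hub : ∀ r ∈ {r : ℝ | ∃ μ : ℂ,
      (∃ z : ((Fin n ⊕ Fin n) ⊕ (Fin n ⊕ Fin n)) → ℂ, z ≠ 0 ∧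
        ((Matrix.fromBlocks ((1 : Matrix (Fin n ⊕ Fin n) (Fin n ⊕ Fin n) ℝ) - (η + α) • J)
            (α • J) 1 0).map (Complex.ofReal)).mulVec z = μ • z) ∧
      r = ‖μ‖}, r ≤ Real.sqrt (1/2 + (1/2) * d0) := by
    rintro r ⟨μ, ⟨z, hz, hzeq⟩, rfl⟩
    rw [hMc, Matrix.fromBlocks_mulVec] at hzeq
    set x : Fin n ⊕ Fin n → ℂ := z ∘ Sum.inl with hxdef
    set y : Fin n ⊕ Fin n → ℂ := z ∘ Sum.inr with hydef
    have h1 : (1 - kC • Jc) *ᵥ x + (aC • Jc) *ᵥ y = μ • x := by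
      funext i
      have := congrFun hzeq (Sum.inl i)
      simp at this; exact this
    have h2 : x = μ • y := by
      funext i
      have := congrFun hzeq (Sum.inr i)
      simp at this; exact this
    have hy0 : y ≠ 0 := by
      intro h
      apply hz
      funext i
      cases i with
      | inl i =>
        have : x i = 0 := by rw [h2, h]; simp
        exact this
      | inr i => exact congrFun h i
    -- eigen equation for Jc
    have h3 : (aC - kC * μ) • (Jc *ᵥ y) = (μ ^ 2 - μ) • y := by
      have e1 : (1 - kC • Jc) *ᵥ x = x - kC • (Jc *ᵥ x) := by
        rw [Matrix.sub_mulVec, Matrix.one_mulVec, Matrix.smul_mulVec]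
      have e2 : (aC • Jc) *ᵥ y = aC • (Jc *ᵥ y) := Matrix.smul_mulVec _ _ _
      rw [e1, e2, h2, Matrix.mulVec_smul] at h1
      funext i
      have := congrFun h1 i
      simp only [Pi.add_apply, Pi.sub_apply, Pi.smul_apply, smul_eq_mul] at this ⊢
      ring_nf
      ring_nf at this
      linear_combination this
    have hcne : aC - kC * μ ≠ 0 := by
      intro hc
      have h' : aC * (1 - 2 * μ) = 0 := by
        rw [hkC] at hc
        linear_combination hc
      have hμhalf : μ = 1 / 2 := by
        rcases mul_eq_zero.mp h' with h | h
        · exact absurd h haCne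
        · linear_combination -h / 2
      have hzero : (μ ^ 2 - μ) • y = 0 := by rw [← h3, hc]; simp
      rcases smul_eq_zero.mp hzero with h | h
      · rw [hμhalf] at h
        norm_num at h
      · exact hy0 h
    set lam : ℂ := (μ ^ 2 - μ) / (aC - kC * μ) with hlamdef
    have hJy : Jc *ᵥ y = lam • y := by
      have h4 := congrArg (fun v => (aC - kC * μ)⁻¹ • v) h3
      simp only [smul_smul, inv_mul_cancel₀ hcne, one_smul] at h4
      rw [hlamdef, div_eq_inv_mul]
      exact h4
    have heq2 : μ ^ 2 - μ = (aC - 2 * aC * μ) * lam := by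
      rw [hlamdef, ← hkC]
      rw [mul_div_assoc', mul_div_cancel_left₀ _ hcne]
    -- decompose y
    set uu : Fin n → ℂ := y ∘ Sum.inl with huudef
    set vv : Fin n → ℂ := y ∘ Sum.inr with hvvdef
    rw [hJc, Matrix.fromBlocks_mulVec] at hJy
    have g1 : Bc *ᵥ vv = lam • uu := by
      funext i
      have := congrFun hJy (Sum.inl i)
      simp at this; exact this
    have g2 : -(Bcᵀ *ᵥ uu) = lam • vv := by
      funext i
      have := congrFun hJy (Sum.inr i)
      simp [Matrix.neg_mulVec] at this; exact this
    have hdetBc : Bc.det ≠ 0 := by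
      intro h
      have : A.det = 0 := my_det_map_zero (by rw [← hBcdef]; exact h)
      rw [this] at hA
      simpa using hA
    have hvv0 : vv ≠ 0 := by
      intro hv
      have huu0 : uu ≠ 0 := by
        intro hu
        apply hy0
        funext i
        cases i with
        | inl i => exact congrFun hu i
        | inr i => exact congrFun hv i
      have hlam0' : lam = 0 := by
        have : lam • uu = 0 := by rw [← g1, hv]; simp [Matrix.mulVec_zero]
        rcases smul_eq_zero.mp this with h | h
        · exact h
        · exact absurd h huu0
      have : Bcᵀ *ᵥ uu = 0 := by
        have := g2
        rw [hlam0', hv] at this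
        simpa using this
      have hdet : Bcᵀ.det = 0 := Matrix.exists_mulVec_eq_zero_iff.mp ⟨uu, huu0, this⟩
      rw [Matrix.det_transpose] at hdet
      exact hdetBc hdet
    have hBtB : (Bcᵀ * Bc) *ᵥ vv = (-lam ^ 2) • vv := by
      have g2' : Bcᵀ *ᵥ uu = -(lam • vv) := by
        rw [← g2]; simp
      rw [← Matrix.mulVec_mulVec, g1, Matrix.mulVec_smul, g2', smul_neg, smul_smul,
        ← neg_smul]
      congr 1
      ring
    obtain ⟨σ, hσnn, hσS, htt⟩ := my_sigma n A (-lam ^ 2) vv hvv0 (by rw [hAAc]; exact hBtB)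
    have hσmem : σ ∈ {σ : ℝ | 0 ≤ σ ∧
        ∃ w : Fin n → ℝ, w ≠ 0 ∧ (Aᵀ * A).mulVec w = (σ ^ 2) • w} := ⟨hσnn, hσS⟩
    have hσle : σ ≤ σmax := hmax.2 hσmem
    have hσge : σmin ≤ σ := hmin.2 hσmem
    have hlamsq : lam ^ 2 = -(σ : ℂ) ^ 2 := by linear_combination -htt
    have hbound := my_scalar_bound σmax σ hmaxpos hσnn hσle μ lam hlamsq heq2
    have hmono : Real.sqrt (1 - σ ^ 2 / σmax ^ 2) ≤ d0 := by
      rw [hd0def]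
      apply Real.sqrt_le_sqrt
      have h1 : σmin ^ 2 ≤ σ ^ 2 := by nlinarith
      have h2 : σmin ^ 2 / σmax ^ 2 ≤ σ ^ 2 / σmax ^ 2 := by
        gcongr
      linarith
    have hfin : ‖μ‖ ^ 2 ≤ 1 / 2 + (1 / 2) * d0 := by linarith
    calc ‖μ‖ = Real.sqrt (‖μ‖ ^ 2) :=
          (Real.sqrt_sq (norm_nonneg _)).symm
      _ ≤ Real.sqrt (1 / 2 + (1 / 2) * d0) := Real.sqrt_le_sqrt hfin
  refine ⟨⟨hmem, fun r hr => hub r hr⟩, ?_⟩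
  have hlt : 1 / 2 + (1 / 2) * d0 < 1 := by linarith
  calc Real.sqrt (1 / 2 + (1 / 2) * d0) < Real.sqrt 1 :=
        Real.sqrt_lt_sqrt (by positivity) hlt
    _ = 1 := Real.sqrt_one
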